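/- Let s, r > 0, k ∈ (0,1), and let (x(t), y(t)) be a solution of ẋ = s x(1-x)(x-y), ẏ = (r/s)(x-k) with x(t) ∈ (0,1). Define L(x,y) = (s/(2r))(y-k)² - (k/s)log x - ((1-k)/s)log(1-x) + c₀. Then d/dt L(x(t), y(t)) = (x(t) - k)² ≥ 0. -/

import Mathlib

theorem stmt_13 (s r k : ℝ) (hs : 0 < s) (hr : 0 < r) (hk : k ∈ Set.Ioo (0:ℝ) 1)
    (x y : ℝ → ℝ)
    (hx' : ∀ t, HasDerivAt x (s * x t * (1 - x t) * (x t - y t)) t)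
    (hy' : ∀ t, HasDerivAt y ((r / s) * (x t - k)) t)
    (hx01 : ∀ t, x t ∈ Set.Ioo (0:ℝ) 1)
    (L : ℝ → ℝ → ℝ)
    (hL : ∀ a b, L a b = (s / (2 * r)) * (b - k) ^ 2 - (k / s) * Real.log a
      - ((1 - k) / s) * Real.log (1 - a)
      + ((k / s) * Real.log k + ((1 - k) / s) * Real.log (1 - k))) :
    ∀ t, HasDerivAt (fun u => L (x u) (y u)) ((x t - k) ^ 2) t ∧ 0 ≤ (x t - k) ^ 2 := by
  intro t
  refine ⟨?_, sq_nonneg _⟩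
  have hx0 : x t ≠ 0 := ne_of_gt (hx01 t).1
  have hx1 : (1 : ℝ) - x t ≠ 0 := by
    have := (hx01 t).2; linarith
  have h1 : HasDerivAt (fun u => (s / (2 * r)) * (y u - k) ^ 2)
      ((s / (2 * r)) * (2 * (y t - k) * ((r / s) * (x t - k)))) t := by
    exact (((hy' t).sub_const k).pow 2).const_mul _ |>.congr_deriv (by ring)
  have h2 : HasDerivAt (fun u => (k / s) * Real.log (x u))
      ((k / s) * ((s * x t * (1 - x t) * (x t - y t)) / x t)) t :=
    ((hx' t).log hx0).const_mul _
  have h3 : HasDerivAt (fun u => ((1 - k) / s) * Real.log (1 - x u))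
      (((1 - k) / s) * (-(s * x t * (1 - x t) * (x t - y t)) / (1 - x t))) t :=
    (((hx' t).const_sub 1).log hx1).const_mul _
  have h : HasDerivAt (fun u => (s / (2 * r)) * (y u - k) ^ 2
      - (k / s) * Real.log (x u) - ((1 - k) / s) * Real.log (1 - x u)
      + ((k / s) * Real.log k + ((1 - k) / s) * Real.log (1 - k)))
      ((x t - k) ^ 2) t := by
    have := ((h1.sub h2).sub h3).add_const
      ((k / s) * Real.log k + ((1 - k) / s) * Real.log (1 - k))
    convert this using 1
    · rfl
    · rfl
    · rfl
    field_simp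
    ring
  exact h.congr_of_eventuallyEq (Filter.Eventually.of_forall fun u => (hL (x u) (y u)))
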